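/- Let G be a hole-free and paraglider-free graph and A an induced subgraph of G isomorphic to the complement of C6. If x, y are adjacent vertices outside A, each having exactly two neighbors in A, then N_A(x) ∪ N_A(y) is a clique in G. -/

import Mathlib

open SimpleGraph

/-- `H` occurs as an induced subgraph of `G`. -/
def HasInducedCopy {V W : Type} (G : SimpleGraph V) (H : SimpleGraph W) : Prop :=
  Nonempty (H ↪g G)

/-- `G` has no induced chordless cycle with at least 5 vertices. -/
def HoleFree {V : Type} (G : SimpleGraph V) : Prop :=
  ∀ n : ℕ, 5 ≤ n → ¬ HasInducedCopy G (cycleGraph n)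

/-- the disjoint union of a `P₂` and a `P₃`. -/
def p2p3 : SimpleGraph (Fin 5) :=
  SimpleGraph.fromRel (fun i j => (i, j) ∈ ([(0,1),(2,3),(3,4)] : List (Fin 5 × Fin 5)))

/-- the paraglider: a diamond on `0,1,2,3` (missing edge `2-3`) plus vertex `4` seeing `2,3`. -/
def paraglider : SimpleGraph (Fin 5) :=
  SimpleGraph.fromRel
    (fun i j => (i, j) ∈ ([(0,1),(0,2),(0,3),(1,2),(1,3),(4,2),(4,3)] : List (Fin 5 × Fin 5)))

/-- the diamond `K₄ - e`. -/
def diamond : SimpleGraph (Fin 4) :=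
  SimpleGraph.fromRel
    (fun i j => (i, j) ∈ ([(0,1),(0,2),(0,3),(1,2),(1,3)] : List (Fin 4 × Fin 4)))

/-- three independent edges. -/
def threeK2 : SimpleGraph (Fin 6) :=
  SimpleGraph.fromRel (fun i j => (i, j) ∈ ([(0,1),(2,3),(4,5)] : List (Fin 6 × Fin 6)))

/-- the matched co-bipartite graph: two cliques of size `k` joined by a perfect matching. -/
def matchedCoBip (k : ℕ) : SimpleGraph (Fin k ⊕ Fin k) :=
  SimpleGraph.fromRel (fun x y =>
    (∃ i j, x = Sum.inl i ∧ y = Sum.inl j) ∨ (∃ i j, x = Sum.inr i ∧ y = Sum.inr j) ∨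
    (∃ i, x = Sum.inl i ∧ y = Sum.inr i))

/-- `G` has no induced hole and no induced antihole. -/
def WeaklyChordal {V : Type} (G : SimpleGraph V) : Prop :=
  ∀ n : ℕ, 5 ≤ n →
    ¬ HasInducedCopy G (cycleGraph n) ∧ ¬ HasInducedCopy G (cycleGraph n)ᶜ

/-- a clique `K` whose removal disconnects the graph. -/
def HasCliqueSeparator {V : Type} (G : SimpleGraph V) : Prop :=
  ∃ K : Set V, G.IsClique K ∧ ¬ (G.induce Kᶜ).Preconnected

/-- an atom: a connected graph with no clique separator. -/
def IsAtomGraph {V : Type} (G : SimpleGraph V) : Prop :=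
  G.Connected ∧ ¬ HasCliqueSeparator G

/-! ### Auxiliary lemmas -/

/-- An induced 5-cycle contradicts hole-freeness. -/
lemma aux_hole5 {V : Type} {G : SimpleGraph V} (hHole : HoleFree G) (v0 v1 v2 v3 v4 : V)
    (h01 : G.Adj v0 v1) (h12 : G.Adj v1 v2) (h23 : G.Adj v2 v3) (h34 : G.Adj v3 v4)
    (h40 : G.Adj v4 v0)
    (n02 : ¬G.Adj v0 v2) (n03 : ¬G.Adj v0 v3) (n13 : ¬G.Adj v1 v3) (n14 : ¬G.Adj v1 v4)
    (n24 : ¬G.Adj v2 v4) : False := by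
  have ne01 := h01.ne; have ne12 := h12.ne; have ne23 := h23.ne; have ne34 := h34.ne
  have ne40 := h40.ne
  have ne02 : v0 ≠ v2 := fun h => n03 (h ▸ h23)
  have ne13 : v1 ≠ v3 := fun h => n14 (h ▸ h34)
  have ne24 : v2 ≠ v4 := fun h => n02 (h ▸ h40).symm
  have ne03 : v0 ≠ v3 := fun h => n02 (h ▸ h23).symm
  have ne14 : v1 ≠ v4 := fun h => n24 (h ▸ h12).symm
  apply hHole 5 (by norm_num)
  refine ⟨⟨⟨fun i => match i with
    | 0 => v0 | 1 => v1 | 2 => v2 | 3 => v3 | 4 => v4, ?_⟩, ?_⟩⟩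
  · intro i j h
    fin_cases i <;> fin_cases j <;>
      first
        | rfl
        | exact absurd h (by assumption)
        | exact absurd h.symm (by assumption)
  · intro i j
    fin_cases i <;> fin_cases j <;>
      first
        | exact iff_of_true (by first | assumption | exact Adj.symm (by assumption)) (by decide)
        | exact iff_of_false
            (by first
              | assumption
              | exact G.loopless.irrefl _
              | exact fun h => absurd h.symm (by assumption)) (by decide)

set_option maxHeartbeats 1000000 in
/-- An induced 6-cycle contradicts hole-freeness. -/
lemma aux_hole6 {V : Type} {G : SimpleGraph V} (hHole : HoleFree G) (v0 v1 v2 v3 v4 v5 : V)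
    (h01 : G.Adj v0 v1) (h12 : G.Adj v1 v2) (h23 : G.Adj v2 v3) (h34 : G.Adj v3 v4)
    (h45 : G.Adj v4 v5) (h50 : G.Adj v5 v0)
    (n02 : ¬G.Adj v0 v2) (n03 : ¬G.Adj v0 v3) (n04 : ¬G.Adj v0 v4)
    (n13 : ¬G.Adj v1 v3) (n14 : ¬G.Adj v1 v4) (n15 : ¬G.Adj v1 v5)
    (n24 : ¬G.Adj v2 v4) (n25 : ¬G.Adj v2 v5) (n35 : ¬G.Adj v3 v5) : False := by
  have ne01 := h01.ne; have ne12 := h12.ne; have ne23 := h23.ne; have ne34 := h34.ne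
  have ne45 := h45.ne; have ne50 := h50.ne
  have ne02 : v0 ≠ v2 := fun h => n03 (h ▸ h23)
  have ne13 : v1 ≠ v3 := fun h => n14 (h ▸ h34)
  have ne24 : v2 ≠ v4 := fun h => n25 (h ▸ h45)
  have ne35 : v3 ≠ v5 := fun h => n03 (h ▸ h50).symm
  have ne04 : v0 ≠ v4 := fun h => n03 (h ▸ h34).symm
  have ne15 : v1 ≠ v5 := fun h => n14 (h ▸ h45).symm
  have ne03 : v0 ≠ v3 := fun h => n04 (h ▸ h34)
  have ne14 : v1 ≠ v4 := fun h => n15 (h ▸ h45)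
  have ne25 : v2 ≠ v5 := fun h => n02 (h ▸ h50).symm
  apply hHole 6 (by norm_num)
  refine ⟨⟨⟨fun i => match i with
    | 0 => v0 | 1 => v1 | 2 => v2 | 3 => v3 | 4 => v4 | 5 => v5, ?_⟩, ?_⟩⟩
  · intro i j h
    fin_cases i <;> fin_cases j <;>
      first
        | rfl
        | exact absurd h (by assumption)
        | exact absurd h.symm (by assumption)
  · intro i j
    fin_cases i <;> fin_cases j <;>
      first
        | exact iff_of_true (by first | assumption | exact Adj.symm (by assumption)) (by decide)
        | exact iff_of_false
            (by first
              | assumption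
              | exact G.loopless.irrefl _
              | exact fun h => absurd h.symm (by assumption)) (by decide)

/-- A vertex adjacent to two consecutive vertices of the co-`C₆` but not to
`i+2` and `i+5` yields a 5-hole. -/
lemma aux_noConsec {V : Type} {G : SimpleGraph V} (hHole : HoleFree G)
    (f : (cycleGraph 6)ᶜ ↪g G) (z : V) (i : Fin 6)
    (h0 : G.Adj z (f i)) (h1 : G.Adj z (f (i + 1)))
    (n2 : ¬G.Adj z (f (i + 2))) (n5 : ¬G.Adj z (f (i + 5))) : False := by
  have fa : ∀ p q : Fin 6, (cycleGraph 6)ᶜ.Adj p q → G.Adj (f p) (f q) :=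
    fun p q h => f.map_rel_iff.mpr h
  have fn : ∀ p q : Fin 6, ¬(cycleGraph 6)ᶜ.Adj p q → ¬G.Adj (f p) (f q) :=
    fun p q h h' => h (f.map_rel_iff.mp h')
  exact aux_hole5 hHole z (f i) (f (i + 2)) (f (i + 5)) (f (i + 1))
    h0
    (fa _ _ ((by decide : ∀ k : Fin 6, (cycleGraph 6)ᶜ.Adj k (k + 2)) i))
    (fa _ _ ((by decide : ∀ k : Fin 6, (cycleGraph 6)ᶜ.Adj (k + 2) (k + 5)) i))
    (fa _ _ ((by decide : ∀ k : Fin 6, (cycleGraph 6)ᶜ.Adj (k + 5) (k + 1)) i))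
    h1.symm
    n2 n5
    (fn _ _ ((by decide : ∀ k : Fin 6, ¬(cycleGraph 6)ᶜ.Adj k (k + 5)) i))
    (fn _ _ ((by decide : ∀ k : Fin 6, ¬(cycleGraph 6)ᶜ.Adj k (k + 1)) i))
    (fn _ _ ((by decide : ∀ k : Fin 6, ¬(cycleGraph 6)ᶜ.Adj (k + 2) (k + 1)) i))

/-- Core of the cross argument: `x` sees exactly `{i, t}` in `A`, `y` sees exactly
`{i+1, s}`, `x ~ y`; contradiction. -/
lemma aux_crossCore {V : Type} {G : SimpleGraph V} (hHole : HoleFree G)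
    (f : (cycleGraph 6)ᶜ ↪g G) (x y : V) (hxy : G.Adj x y) (i t s : Fin 6)
    (hx : ∀ k, G.Adj x (f k) ↔ k = i ∨ k = t)
    (hy : ∀ k, G.Adj y (f k) ↔ k = i + 1 ∨ k = s) : False := by
  have fa : ∀ p q : Fin 6, (cycleGraph 6)ᶜ.Adj p q → G.Adj (f p) (f q) :=
    fun p q h => f.map_rel_iff.mpr h
  have fn : ∀ p q : Fin 6, ¬(cycleGraph 6)ᶜ.Adj p q → ¬G.Adj (f p) (f q) :=
    fun p q h h' => h (f.map_rel_iff.mp h')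
  have nx : ∀ k, k ≠ i → k ≠ t → ¬G.Adj x (f k) :=
    fun k h1 h2 h => ((hx k).mp h).elim h1 h2
  have ny : ∀ k, k ≠ i + 1 → k ≠ s → ¬G.Adj y (f k) :=
    fun k h1 h2 h => ((hy k).mp h).elim h1 h2
  have nx' : ∀ k, k ≠ i → k ≠ t → ¬G.Adj (f k) x := fun k h1 h2 h => nx k h1 h2 h.symm
  have ny' : ∀ k, k ≠ i + 1 → k ≠ s → ¬G.Adj (f k) y := fun k h1 h2 h => ny k h1 h2 h.symm
  have hxi : G.Adj x (f i) := (hx i).mpr (Or.inl rfl)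
  have hyi : G.Adj y (f (i + 1)) := (hy (i + 1)).mpr (Or.inl rfl)
  have ht1 : t ≠ i + 1 := by
    rintro rfl
    exact aux_noConsec hHole f x i hxi ((hx _).mpr (Or.inr rfl))
      (nx _ ((by decide : ∀ k : Fin 6, k + 2 ≠ k) _) ((by decide : ∀ k : Fin 6, k + 2 ≠ k + 1) _))
      (nx _ ((by decide : ∀ k : Fin 6, k + 5 ≠ k) _) ((by decide : ∀ k : Fin 6, k + 5 ≠ k + 1) _))
  have hs0 : s ≠ i := by
    rintro rfl
    exact aux_noConsec hHole f y _ ((hy _).mpr (Or.inr rfl)) hyi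
      (ny _ ((by decide : ∀ k : Fin 6, k + 2 ≠ k + 1) _) ((by decide : ∀ k : Fin 6, k + 2 ≠ k) _))
      (ny _ ((by decide : ∀ k : Fin 6, k + 5 ≠ k + 1) _) ((by decide : ∀ k : Fin 6, k + 5 ≠ k) _))
  by_cases h3 : t = i + 3 ∨ s = i + 3
  · by_cases h4 : t = i + 4 ∨ s = i + 4
    · rcases h3 with rfl | rfl
      · rcases h4 with h4 | rfl
        · exact absurd h4 ((by decide : ∀ k : Fin 6, k + 3 ≠ k + 4) i)
        · -- Case 3 : t = i+3, s = i+4 : 6-hole x, f i, f (i+2), f (i+5), f (i+1), y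
          exact aux_hole6 hHole x (f i) (f (i + 2)) (f (i + 5)) (f (i + 1)) y
            hxi
            (fa _ _ ((by decide : ∀ k : Fin 6, (cycleGraph 6)ᶜ.Adj k (k + 2)) i))
            (fa _ _ ((by decide : ∀ k : Fin 6, (cycleGraph 6)ᶜ.Adj (k + 2) (k + 5)) i))
            (fa _ _ ((by decide : ∀ k : Fin 6, (cycleGraph 6)ᶜ.Adj (k + 5) (k + 1)) i))
            hyi.symm hxy.symm
            (nx _ ((by decide : ∀ k : Fin 6, k + 2 ≠ k) i)
              ((by decide : ∀ k : Fin 6, k + 2 ≠ k + 3) i))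
            (nx _ ((by decide : ∀ k : Fin 6, k + 5 ≠ k) i)
              ((by decide : ∀ k : Fin 6, k + 5 ≠ k + 3) i))
            (nx _ ((by decide : ∀ k : Fin 6, k + 1 ≠ k) i)
              ((by decide : ∀ k : Fin 6, k + 1 ≠ k + 3) i))
            (fn _ _ ((by decide : ∀ k : Fin 6, ¬(cycleGraph 6)ᶜ.Adj k (k + 5)) i))
            (fn _ _ ((by decide : ∀ k : Fin 6, ¬(cycleGraph 6)ᶜ.Adj k (k + 1)) i))
            (ny' _ ((by decide : ∀ k : Fin 6, k ≠ k + 1) i)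
              ((by decide : ∀ k : Fin 6, k ≠ k + 4) i))
            (fn _ _ ((by decide : ∀ k : Fin 6, ¬(cycleGraph 6)ᶜ.Adj (k + 2) (k + 1)) i))
            (ny' _ ((by decide : ∀ k : Fin 6, k + 2 ≠ k + 1) i)
              ((by decide : ∀ k : Fin 6, k + 2 ≠ k + 4) i))
            (ny' _ ((by decide : ∀ k : Fin 6, k + 5 ≠ k + 1) i)
              ((by decide : ∀ k : Fin 6, k + 5 ≠ k + 4) i))
      · rcases h4 with rfl | h4
        · -- Case 4 : t = i+4, s = i+3 : 6-hole y, f (i+1), f (i+5), f (i+2), f i, x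
          exact aux_hole6 hHole y (f (i + 1)) (f (i + 5)) (f (i + 2)) (f i) x
            hyi
            (fa _ _ ((by decide : ∀ k : Fin 6, (cycleGraph 6)ᶜ.Adj (k + 1) (k + 5)) i))
            (fa _ _ ((by decide : ∀ k : Fin 6, (cycleGraph 6)ᶜ.Adj (k + 5) (k + 2)) i))
            (fa _ _ ((by decide : ∀ k : Fin 6, (cycleGraph 6)ᶜ.Adj (k + 2) k) i))
            hxi.symm hxy
            (ny _ ((by decide : ∀ k : Fin 6, k + 5 ≠ k + 1) i)
              ((by decide : ∀ k : Fin 6, k + 5 ≠ k + 3) i))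
            (ny _ ((by decide : ∀ k : Fin 6, k + 2 ≠ k + 1) i)
              ((by decide : ∀ k : Fin 6, k + 2 ≠ k + 3) i))
            (ny _ ((by decide : ∀ k : Fin 6, k ≠ k + 1) i)
              ((by decide : ∀ k : Fin 6, k ≠ k + 3) i))
            (fn _ _ ((by decide : ∀ k : Fin 6, ¬(cycleGraph 6)ᶜ.Adj (k + 1) (k + 2)) i))
            (fn _ _ ((by decide : ∀ k : Fin 6, ¬(cycleGraph 6)ᶜ.Adj (k + 1) k) i))
            (nx' _ ((by decide : ∀ k : Fin 6, k + 1 ≠ k) i)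
              ((by decide : ∀ k : Fin 6, k + 1 ≠ k + 4) i))
            (fn _ _ ((by decide : ∀ k : Fin 6, ¬(cycleGraph 6)ᶜ.Adj (k + 5) k) i))
            (nx' _ ((by decide : ∀ k : Fin 6, k + 5 ≠ k) i)
              ((by decide : ∀ k : Fin 6, k + 5 ≠ k + 4) i))
            (nx' _ ((by decide : ∀ k : Fin 6, k + 2 ≠ k) i)
              ((by decide : ∀ k : Fin 6, k + 2 ≠ k + 4) i))
        · exact absurd h4 ((by decide : ∀ k : Fin 6, k + 3 ≠ k + 4) i)
    · -- i+4 sees neither x nor y : 5-hole x, f i, f (i+4), f (i+1), y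
      push_neg at h4
      exact aux_hole5 hHole x (f i) (f (i + 4)) (f (i + 1)) y
        hxi
        (fa _ _ ((by decide : ∀ k : Fin 6, (cycleGraph 6)ᶜ.Adj k (k + 4)) i))
        (fa _ _ ((by decide : ∀ k : Fin 6, (cycleGraph 6)ᶜ.Adj (k + 4) (k + 1)) i))
        hyi.symm hxy.symm
        (nx _ ((by decide : ∀ k : Fin 6, k + 4 ≠ k) i) (Ne.symm h4.1))
        (nx _ ((by decide : ∀ k : Fin 6, k + 1 ≠ k) i) (Ne.symm ht1))
        (fn _ _ ((by decide : ∀ k : Fin 6, ¬(cycleGraph 6)ᶜ.Adj k (k + 1)) i))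
        (ny' _ ((by decide : ∀ k : Fin 6, k ≠ k + 1) i) (Ne.symm hs0))
        (ny' _ ((by decide : ∀ k : Fin 6, k + 4 ≠ k + 1) i) (Ne.symm h4.2))
  · -- i+3 sees neither x nor y : 5-hole x, f i, f (i+3), f (i+1), y
    push_neg at h3
    exact aux_hole5 hHole x (f i) (f (i + 3)) (f (i + 1)) y
      hxi
      (fa _ _ ((by decide : ∀ k : Fin 6, (cycleGraph 6)ᶜ.Adj k (k + 3)) i))
      (fa _ _ ((by decide : ∀ k : Fin 6, (cycleGraph 6)ᶜ.Adj (k + 3) (k + 1)) i))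
      hyi.symm hxy.symm
      (nx _ ((by decide : ∀ k : Fin 6, k + 3 ≠ k) i) (Ne.symm h3.1))
      (nx _ ((by decide : ∀ k : Fin 6, k + 1 ≠ k) i) (Ne.symm ht1))
      (fn _ _ ((by decide : ∀ k : Fin 6, ¬(cycleGraph 6)ᶜ.Adj k (k + 1)) i))
      (ny' _ ((by decide : ∀ k : Fin 6, k ≠ k + 1) i) (Ne.symm hs0))
      (ny' _ ((by decide : ∀ k : Fin 6, k + 3 ≠ k + 1) i) (Ne.symm h3.2))

/-- The cross argument in its applied form. -/
lemma aux_cross {V : Type} {G : SimpleGraph V} (hHole : HoleFree G)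
    (f : (cycleGraph 6)ᶜ ↪g G) (x y : V) (hxy : G.Adj x y) (a t b s : Fin 6)
    (hxadj : ∀ k, G.Adj x (f k) ↔ k = a ∨ k = t)
    (hyadj : ∀ k, G.Adj y (f k) ↔ k = b ∨ k = s)
    (k : Fin 6) (h1 : G.Adj x (f k)) (h2 : G.Adj y (f (k + 1))) : False := by
  obtain ⟨t', hx'⟩ : ∃ t', ∀ m, G.Adj x (f m) ↔ m = k ∨ m = t' := by
    rcases (hxadj k).mp h1 with rfl | rfl
    · exact ⟨t, hxadj⟩
    · exact ⟨a, fun m => (hxadj m).trans or_comm⟩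
  obtain ⟨s', hy'⟩ : ∃ s', ∀ m, G.Adj y (f m) ↔ m = k + 1 ∨ m = s' := by
    rcases (hyadj (k + 1)).mp h2 with rfl | rfl
    · exact ⟨s, hyadj⟩
    · exact ⟨b, fun m => (hyadj m).trans or_comm⟩
  exact aux_crossCore hHole f x y hxy k t' s' hx' hy'

/-- for adjacent `x, y ∈ A₂`, `N_A(x) ∪ N_A(y)` is a clique. -/
theorem A2_union_clique {V : Type} (G : SimpleGraph V)
    (hHole : HoleFree G) (hPara : ¬ HasInducedCopy G paraglider)
    (f : (cycleGraph 6)ᶜ ↪g G)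
    (x y : V) (hx : x ∉ Set.range ⇑f) (hy : y ∉ Set.range ⇑f) (hxy : G.Adj x y)
    (h2x : {i : Fin 6 | G.Adj x (f i)}.ncard = 2)
    (h2y : {i : Fin 6 | G.Adj y (f i)}.ncard = 2) :
    G.IsClique (⇑f '' {i : Fin 6 | G.Adj x (f i)} ∪ ⇑f '' {i : Fin 6 | G.Adj y (f i)}) := by
  obtain ⟨a, t, hat, hSx⟩ := Set.ncard_eq_two.mp h2x
  obtain ⟨b, s, hbs, hSy⟩ := Set.ncard_eq_two.mp h2y
  have hxadj : ∀ i, G.Adj x (f i) ↔ i = a ∨ i = t := fun i => by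
    simpa using Set.ext_iff.mp hSx i
  have hyadj : ∀ i, G.Adj y (f i) ↔ i = b ∨ i = s := fun i => by
    simpa using Set.ext_iff.mp hSy i
  have step : ∀ i : Fin 6, G.Adj x (f i) ∨ G.Adj y (f i) →
      G.Adj x (f (i + 1)) ∨ G.Adj y (f (i + 1)) → False := by
    rintro i (hi | hi) (hj | hj)
    · rcases (hxadj i).mp hi with rfl | rfl
      · rcases (hxadj _).mp hj with h2 | rfl
        · exact absurd h2 ((by decide : ∀ k : Fin 6, k + 1 ≠ k) _)
        · exact aux_noConsec hHole f x _ hi hj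
            (fun h => (by decide : ∀ k : Fin 6, ¬(k + 2 = k ∨ k + 2 = k + 1)) _ ((hxadj _).mp h))
            (fun h => (by decide : ∀ k : Fin 6, ¬(k + 5 = k ∨ k + 5 = k + 1)) _ ((hxadj _).mp h))
      · rcases (hxadj _).mp hj with rfl | h2
        · exact aux_noConsec hHole f x _ hi hj
            (fun h => (by decide : ∀ k : Fin 6, ¬(k + 2 = k + 1 ∨ k + 2 = k)) _ ((hxadj _).mp h))
            (fun h => (by decide : ∀ k : Fin 6, ¬(k + 5 = k + 1 ∨ k + 5 = k)) _ ((hxadj _).mp h))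
        · exact absurd h2 ((by decide : ∀ k : Fin 6, k + 1 ≠ k) _)
    · exact aux_cross hHole f x y hxy a t b s hxadj hyadj i hi hj
    · exact aux_cross hHole f y x hxy.symm b s a t hyadj hxadj i hi hj
    · rcases (hyadj i).mp hi with rfl | rfl
      · rcases (hyadj _).mp hj with h2 | rfl
        · exact absurd h2 ((by decide : ∀ k : Fin 6, k + 1 ≠ k) _)
        · exact aux_noConsec hHole f y _ hi hj
            (fun h => (by decide : ∀ k : Fin 6, ¬(k + 2 = k ∨ k + 2 = k + 1)) _ ((hyadj _).mp h))
            (fun h => (by decide : ∀ k : Fin 6, ¬(k + 5 = k ∨ k + 5 = k + 1)) _ ((hyadj _).mp h))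
      · rcases (hyadj _).mp hj with rfl | h2
        · exact aux_noConsec hHole f y _ hi hj
            (fun h => (by decide : ∀ k : Fin 6, ¬(k + 2 = k + 1 ∨ k + 2 = k)) _ ((hyadj _).mp h))
            (fun h => (by decide : ∀ k : Fin 6, ¬(k + 5 = k + 1 ∨ k + 5 = k)) _ ((hyadj _).mp h))
        · exact absurd h2 ((by decide : ∀ k : Fin 6, k + 1 ≠ k) _)
  have key : ∀ i j : Fin 6, G.Adj x (f i) ∨ G.Adj y (f i) →
      G.Adj x (f j) ∨ G.Adj y (f j) → i ≠ j → G.Adj (f i) (f j) := by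
    intro i j hi hj hij
    refine f.map_rel_iff.mpr
      (((by decide : ∀ i j : Fin 6, i ≠ j → j ≠ i + 1 → i ≠ j + 1 → (cycleGraph 6)ᶜ.Adj i j))
        i j hij ?_ ?_)
    · rintro rfl
      exact step i hi hj
    · rintro rfl
      exact step j hj hi
  rintro u hu v hv huv
  rcases hu with ⟨i, hi, rfl⟩ | ⟨i, hi, rfl⟩ <;> rcases hv with ⟨j, hj, rfl⟩ | ⟨j, hj, rfl⟩
  · exact key i j (Or.inl hi) (Or.inl hj) (fun h => huv (congrArg f h))
  · exact key i j (Or.inl hi) (Or.inr hj) (fun h => huv (congrArg f h))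
  · exact key i j (Or.inr hi) (Or.inl hj) (fun h => huv (congrArg f h))
  · exact key i j (Or.inr hi) (Or.inr hj) (fun h => huv (congrArg f h))
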